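/- In the setting of the previous statement, assume further ord(s) = 0 (the non-superspecial case). Then ϖ(a₀/b₁)^{p+1} and ϖ s^{p+1}/t^p are units in the valuation ring with the same reduction to the residue field, where ϖ is any element with ord(ϖ) = 1. -/

import Mathlib

set_option maxHeartbeats 1000000 in
/-- Lemma 3.4.3 of the paper.  `K` is the fraction field of a rank-1 valuation
ring of characteristic `p` (such as `𝒪^♭`), with additive valuation `ord`
(real-valued on nonzero elements; the listed ring elements have `ord ≥ 0`).
Suppose `t, s, a₀, a₁, b₀, b₁` satisfy `a₀^p = a₁t^p + b₁s^p`, `a₁^p = a₀`,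
`b₀^p = b₁`, `b₁^p = b₀t^p`, with `ord t = 1/p`, `ord s = 0` (the
non-superspecial case) and `b₀ ≠ 0`.  Then for any `ϖ` with `ord ϖ = 1`, the
elements `ϖ(a₀/b₁)^(p+1)` and `ϖs^(p+1)/t^p` are units (valuation `0`) with
the same reduction to the residue field (their difference has positive
valuation, or they are equal). -/
theorem stmt10 (p : ℕ) (hp : p.Prime) (K : Type*) [Field K] [CharP K p]
    (ord : K → ℝ)
    (hmul : ∀ x y : K, x ≠ 0 → y ≠ 0 → ord (x * y) = ord x + ord y)
    (hadd : ∀ x y : K, x ≠ 0 → y ≠ 0 → x + y ≠ 0 → min (ord x) (ord y) ≤ ord (x + y))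
    (t s a₀ a₁ b₀ b₁ ϖ : K)
    (ht : t ≠ 0) (hs : s ≠ 0) (hb₀ : b₀ ≠ 0) (hϖ : ϖ ≠ 0)
    (hnonneg : ∀ x ∈ ({t, s, a₀, a₁, b₀, b₁} : Set K), x ≠ 0 → 0 ≤ ord x)
    (hordt : ord t = 1 / (p : ℝ)) (hords : ord s = 0) (hordϖ : ord ϖ = 1)
    (e₁ : a₀ ^ p = a₁ * t ^ p + b₁ * s ^ p)
    (e₂ : a₁ ^ p = a₀)
    (e₃ : b₀ ^ p = b₁)
    (e₄ : b₁ ^ p = b₀ * t ^ p) :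
    ord (ϖ * (a₀ / b₁) ^ (p + 1)) = 0 ∧
    ord (ϖ * s ^ (p + 1) / t ^ p) = 0 ∧
    (ϖ * (a₀ / b₁) ^ (p + 1) = ϖ * s ^ (p + 1) / t ^ p ∨
      0 < ord (ϖ * (a₀ / b₁) ^ (p + 1) - ϖ * s ^ (p + 1) / t ^ p)) := by
  haveI : Fact p.Prime := ⟨hp⟩
  have hp2 : 2 ≤ p := hp.two_le
  have hq2 : (2:ℝ) ≤ (p:ℝ) := by exact_mod_cast hp2
  set q : ℝ := (p:ℝ) with hqdef
  have hq0 : (0:ℝ) < q := by linarith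
  have hq21 : (0:ℝ) < q^2 - 1 := by nlinarith
  -- basic valuation lemmas
  have h1 : ord 1 = 0 := by
    have := hmul 1 1 one_ne_zero one_ne_zero
    rw [one_mul] at this; linarith
  have hpow : ∀ (x : K), x ≠ 0 → ∀ n : ℕ, ord (x ^ n) = n * ord x := by
    intro x hx n
    induction n with
    | zero => simpa using h1
    | succ n ih =>
      rw [pow_succ, hmul _ _ (pow_ne_zero _ hx) hx, ih]; push_cast; ring
  have hneg : ∀ x : K, x ≠ 0 → ord (-x) = ord x := by
    intro x hx
    have hm1 : ord (-1 : K) = 0 := by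
      have := hmul (-1) (-1) (by norm_num) (by norm_num)
      rw [neg_mul_neg, one_mul, h1] at this; linarith
    have := hmul (-1) x (by norm_num) hx
    rw [neg_one_mul, hm1, zero_add] at this; exact this
  have hdiv : ∀ x y : K, x ≠ 0 → y ≠ 0 → ord (x / y) = ord x - ord y := by
    intro x y hx hy
    have := hmul (x / y) y (div_ne_zero hx hy) hy
    rw [div_mul_cancel₀ _ hy] at this; linarith
  have hult : ∀ x y : K, x ≠ 0 → y ≠ 0 → ord y < ord x →
      x + y ≠ 0 ∧ ord (x + y) = ord y := by
    intro x y hx hy hlt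
    have hne : x + y ≠ 0 := by
      intro h
      have hxy : x = -y := by linear_combination h
      rw [hxy, hneg y hy] at hlt; exact lt_irrefl _ hlt
    refine ⟨hne, ?_⟩
    have h1' := hadd x y hx hy hne
    rw [min_eq_right hlt.le] at h1'
    have e : (x + y) + (-x) = y := by ring
    have h2' := hadd (x+y) (-x) hne (neg_ne_zero.mpr hx) (by rw [e]; exact hy)
    rw [e, hneg x hx] at h2'
    rcases min_le_iff.mp h2' with h | h
    · linarith
    · linarith
  -- nonzero facts
  have hb₁ : b₁ ≠ 0 := e₃ ▸ pow_ne_zero p hb₀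
  have ha₁ : a₁ ≠ 0 := by
    intro h
    have ha0 : a₀ = 0 := by rw [← e₂, h, zero_pow hp.ne_zero]
    rw [ha0, h, zero_pow hp.ne_zero, zero_mul, zero_add] at e₁
    exact (mul_ne_zero hb₁ (pow_ne_zero p hs)) e₁.symm
  have ha₀ : a₀ ≠ 0 := e₂ ▸ pow_ne_zero p ha₁
  have htp : t ^ p ≠ 0 := pow_ne_zero p ht
  have hsp : s ^ p ≠ 0 := pow_ne_zero p hs
  -- ord of b₀
  have hB : ord b₀ = 1 / (q^2 - 1) := by
    have e5 : (b₀ ^ p) ^ p = b₀ * t ^ p := by rw [e₃, e₄]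
    have h5 : q * (q * ord b₀) = ord b₀ + q * ord t := by
      have l := hpow (b₀ ^ p) (pow_ne_zero p hb₀) p
      rw [hpow b₀ hb₀ p] at l
      rw [e5, hmul b₀ (t^p) hb₀ htp, hpow t ht p] at l
      linarith [l]
    rw [hordt] at h5
    have hq0' : q ≠ 0 := ne_of_gt hq0
    field_simp at h5 ⊢
    nlinarith [h5]
  have hB₁ : ord b₁ = q * ord b₀ := by rw [← e₃, hpow b₀ hb₀ p]
  -- key identity and ord of a₁
  have ha₁p2 : a₁ ^ (p^2) = a₁ * t ^ p + b₁ * s ^ p := by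
    rw [pow_two, pow_mul, e₂, e₁]
  have hb₀p2 : b₀ ^ (p^2) = b₀ * t ^ p := by
    rw [pow_two, pow_mul, e₃, e₄]
  have e6 : (a₁ / b₀) ^ (p^2) = a₁ / b₀ + s ^ p * b₁ / (b₀ * t ^ p) := by
    rw [div_pow, ha₁p2, hb₀p2]
    field_simp
  have hqne : q ≠ 0 := ne_of_gt hq0
  have hq1 : q + 1 ≠ 0 := by positivity
  have hq2' : q ^ 2 - 1 ≠ 0 := ne_of_gt hq21
  have hc_ne : s ^ p * b₁ / (b₀ * t ^ p) ≠ 0 :=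
    div_ne_zero (mul_ne_zero hsp hb₁) (mul_ne_zero hb₀ htp)
  have hx_ne : a₁ / b₀ ≠ 0 := div_ne_zero ha₁ hb₀
  have hordc : ord (s ^ p * b₁ / (b₀ * t ^ p)) = -q / (q + 1) := by
    rw [hdiv _ _ (mul_ne_zero hsp hb₁) (mul_ne_zero hb₀ htp),
      hmul _ _ hsp hb₁, hmul _ _ hb₀ htp, hpow s hs p, hpow t ht p,
      hords, hordt, hB₁, hB]
    field_simp
    ring
  have hordx : ord (a₁ / b₀) = -1 / (q * (q + 1)) := by
    have hsum : ord (a₁ / b₀ + s ^ p * b₁ / (b₀ * t ^ p)) = q ^ 2 * ord (a₁ / b₀) := by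
      rw [← e6, hpow _ hx_ne]
      push_cast
      ring
    have hg0 : -q / (q + 1) < 0 := by
      have : 0 < q / (q + 1) := div_pos hq0 (by linarith)
      linarith [this, neg_div (q+1) q]
    rcases lt_trichotomy (ord (a₁ / b₀)) (-q / (q + 1)) with hlt | heq | hgt
    · exfalso
      have h' := hult _ _ hc_ne hx_ne (by rw [hordc]; exact hlt)
      have h2 : ord (a₁ / b₀ + s ^ p * b₁ / (b₀ * t ^ p)) = ord (a₁ / b₀) := by
        rw [add_comm]; exact h'.2
      rw [hsum] at h2
      have hu0 : ord (a₁ / b₀) < 0 := lt_trans hlt hg0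
      nlinarith [h2, hu0, hq21]
    · exfalso
      have hne6 : a₁ / b₀ + s ^ p * b₁ / (b₀ * t ^ p) ≠ 0 := by
        rw [← e6]; exact pow_ne_zero _ hx_ne
      have hm := hadd _ _ hx_ne hc_ne hne6
      rw [hsum, hordc, heq, min_self] at hm
      have hr : 0 < q / (q + 1) := div_pos hq0 (by linarith)
      rw [heq] at hsum
      nlinarith [hm, hr, hq21, neg_div q (q+1)]
    · have h' := hult _ _ hx_ne hc_ne (by rw [hordc]; exact hgt)
      have heqq : q ^ 2 * ord (a₁ / b₀) = -q / (q + 1) := by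
        rw [← hsum, h'.2, hordc]
      have hval : q ^ 2 * (-1 / (q * (q + 1))) = -q / (q + 1) := by
        field_simp
      exact mul_left_cancel₀ (pow_ne_zero 2 hqne) (heqq.trans hval.symm)
  have hA : ord a₁ = 1 / (q * (q ^ 2 - 1)) := by
    have l := hdiv a₁ b₀ ha₁ hb₀
    rw [hordx, hB] at l
    have : (-1 : ℝ) / (q * (q + 1)) + 1 / (q ^ 2 - 1) = 1 / (q * (q ^ 2 - 1)) := by
      field_simp
      ring
    linarith [l, this]
  have hA₀ : ord a₀ = 1 / (q ^ 2 - 1) := by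
    have l : ord a₀ = q * ord a₁ := by rw [← e₂, hpow a₁ ha₁ p]
    rw [l, hA]
    field_simp
  -- the three goals
  have hdb_ne : a₀ / b₁ ≠ 0 := div_ne_zero ha₀ hb₁
  refine ⟨?_, ?_, ?_⟩
  · rw [hmul ϖ _ hϖ (pow_ne_zero _ hdb_ne), hpow _ hdb_ne, hdiv a₀ b₁ ha₀ hb₁,
      hordϖ, hA₀, hB₁, hB]
    push_cast
    field_simp
    ring
  · rw [hdiv _ _ (mul_ne_zero hϖ (pow_ne_zero _ hs)) htp,
      hmul ϖ _ hϖ (pow_ne_zero _ hs), hpow s hs, hpow t ht, hords, hordt, hordϖ]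
    push_cast
    field_simp
    rw [hqdef]; ring
  · right
    have e7 : (a₀ / b₀ - s) ^ p = a₁ * t ^ p / b₁ := by
      rw [sub_pow_char, div_pow, e₁, e₃]
      field_simp
      ring
    have hd_ne : a₀ / b₀ - s ≠ 0 := by
      intro h
      rw [h, zero_pow hp.ne_zero] at e7
      exact (div_ne_zero (mul_ne_zero ha₁ htp) hb₁) e7.symm
    have hordd : ord (a₀ / b₀ - s) = (q - 1) / q ^ 2 := by
      have l := hpow _ hd_ne p
      rw [e7, hdiv _ _ (mul_ne_zero ha₁ htp) hb₁, hmul a₁ _ ha₁ htp, hpow t ht,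
        hA, hordt, hB₁, hB] at l
      have hval : q * ((q - 1) / q ^ 2) = 1 / (q * (q ^ 2 - 1)) + q * (1 / q) - q * (1 / (q ^ 2 - 1)) := by
        field_simp
        ring
      exact mul_left_cancel₀ hqne (l.symm.trans hval.symm)
    have key : ϖ * (a₀ / b₁) ^ (p + 1) - ϖ * s ^ (p + 1) / t ^ p
        = ϖ * (a₀ * a₁) / (b₀ * b₁) + ϖ * (a₀ / b₀ - s) * s ^ p / t ^ p := by
      rw [div_pow, pow_succ a₀, pow_succ b₁, pow_succ s, e₁, e₄]
      field_simp
      ring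
    have hT1_ne : ϖ * (a₀ * a₁) / (b₀ * b₁) ≠ 0 :=
      div_ne_zero (mul_ne_zero hϖ (mul_ne_zero ha₀ ha₁)) (mul_ne_zero hb₀ hb₁)
    have hT2_ne : ϖ * (a₀ / b₀ - s) * s ^ p / t ^ p ≠ 0 :=
      div_ne_zero (mul_ne_zero (mul_ne_zero hϖ hd_ne) hsp) htp
    have hordT1 : ord (ϖ * (a₀ * a₁) / (b₀ * b₁)) = (q - 1) / q := by
      rw [hdiv _ _ (mul_ne_zero hϖ (mul_ne_zero ha₀ ha₁)) (mul_ne_zero hb₀ hb₁),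
        hmul ϖ _ hϖ (mul_ne_zero ha₀ ha₁), hmul a₀ a₁ ha₀ ha₁, hmul b₀ b₁ hb₀ hb₁,
        hordϖ, hA₀, hA, hB₁, hB]
      field_simp
      ring
    have hordT2 : ord (ϖ * (a₀ / b₀ - s) * s ^ p / t ^ p) = (q - 1) / q ^ 2 := by
      rw [hdiv _ _ (mul_ne_zero (mul_ne_zero hϖ hd_ne) hsp) htp,
        hmul _ _ (mul_ne_zero hϖ hd_ne) hsp, hmul ϖ _ hϖ hd_ne,
        hpow s hs, hpow t ht, hordϖ, hordd, hords, hordt]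
      field_simp
      rw [hqdef]; ring
    have hltT : ord (ϖ * (a₀ / b₀ - s) * s ^ p / t ^ p) < ord (ϖ * (a₀ * a₁) / (b₀ * b₁)) := by
      rw [hordT1, hordT2, div_lt_div_iff₀ (by positivity) hq0]
      nlinarith
    have hfin := hult _ _ hT1_ne hT2_ne hltT
    rw [key, hfin.2, hordT2]
    apply div_pos <;> nlinarith
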